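/- In any pure Nash equilibrium network of the adversarial network creation game, if two agents u and v satisfy d_G(u,v) ≥ 4ℓ for some positive integer ℓ, then the edge price satisfies α ≥ (|E|/(|E|+1))·2ℓ². Consequently every Nash equilibrium network has diameter O(√α). -/

import Mathlib

open scoped BigOperators ENNReal

/-- A walk of length `n` between two vertices under step relation `r`. -/
def walkLen {V : Type*} (r : V → V → Prop) : ℕ → V → V → Prop
  | 0, u, v => u = v
  | (n+1), u, v => ∃ w, r u w ∧ walkLen r n w v

/-- Adjacency in a multigraph given by a multiset of (undirected) edges. -/
def mAdj {V : Type*} (m : Multiset (Sym2 V)) (u v : V) : Prop := s(u, v) ∈ m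

/-- Hop-count distance (possibly infinite) in a multigraph. -/
noncomputable def medist {V : Type*} (m : Multiset (Sym2 V)) (u v : V) : ℕ∞ :=
  sInf ((fun n : ℕ => (n : ℕ∞)) '' {n | walkLen (mAdj m) n u v})

/-- Expected distance cost (in `ℝ≥0∞`) of vertex `u` in a multigraph under uniform random
deletion of one edge (if there are no edges, the plain distance cost). -/
noncomputable def evCost {V : Type*} [DecidableEq V] [Fintype V]
    (m : Multiset (Sym2 V)) (u : V) : ℝ≥0∞ :=
  if Multiset.card m = 0 then ∑ v : V, ((medist m u v : ℕ∞) : ℝ≥0∞)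
  else (Multiset.card m : ℝ≥0∞)⁻¹ *
    (m.map (fun e => ∑ v : V, ((medist (m.erase e) u v : ℕ∞) : ℝ≥0∞))).sum

/-- The multigraph built from a strategy profile of the network creation game. -/
def edgeMS {n : ℕ} (s : Fin n → Multiset (Fin n)) : Multiset (Sym2 (Fin n)) :=
  ∑ u : Fin n, (s u).map (fun v => s(u, v))

/-- Cost of agent `u`: `α` per owned edge plus expected distance cost. -/
noncomputable def agentCost {n : ℕ} (α : ℝ≥0∞) (s : Fin n → Multiset (Fin n)) (u : Fin n) :
    ℝ≥0∞ :=
  α * (Multiset.card (s u) : ℝ≥0∞) + evCost (edgeMS s) u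

/-- Pure Nash equilibrium: no agent can strictly decrease its cost by a unilateral change
of the multiset of edges it owns (an agent may not buy edges to itself). -/
def IsNE {n : ℕ} (α : ℝ≥0∞) (s : Fin n → Multiset (Fin n)) : Prop :=
  ∀ u : Fin n, ∀ t : Multiset (Fin n), u ∉ t →
    agentCost α s u ≤ agentCost α (Function.update s u t) u

section walks
variable {V : Type*} {r r' : V → V → Prop}

theorem walkLen_trans {a b : ℕ} {u w v : V} (h1 : walkLen r a u w) (h2 : walkLen r b w v) :
    walkLen r (a + b) u v := by
  induction a generalizing u with
  | zero => cases h1; simpa using h2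
  | succ n ih =>
    obtain ⟨x, hx, hw⟩ := h1
    rw [show n + 1 + b = (n + b) + 1 from by omega]
    exact ⟨x, hx, ih hw⟩

theorem walkLen_split {a b : ℕ} {u v : V} (h : walkLen r (a + b) u v) :
    ∃ w, walkLen r a u w ∧ walkLen r b w v := by
  induction a generalizing u with
  | zero => exact ⟨u, rfl, by simpa using h⟩
  | succ n ih =>
    rw [show n + 1 + b = (n + b) + 1 from by omega] at h
    obtain ⟨x, hx, hw⟩ := h
    obtain ⟨w, h1, h2⟩ := ih hw
    exact ⟨w, ⟨x, hx, h1⟩, h2⟩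

theorem walkLen_reverse (hsym : ∀ x y, r x y → r y x) {n : ℕ} {u v : V}
    (h : walkLen r n u v) : walkLen r n v u := by
  induction n generalizing u with
  | zero => exact h.symm
  | succ n ih =>
    obtain ⟨x, hx, hw⟩ := h
    have : walkLen r (n + 1) v u := walkLen_trans (ih hw) ⟨u, hsym _ _ hx, rfl⟩
    exact this

theorem walkLen_mono (hmono : ∀ x y, r x y → r' x y) {n : ℕ} {u v : V}
    (h : walkLen r n u v) : walkLen r' n u v := by
  induction n generalizing u with
  | zero => exact h
  | succ n ih => obtain ⟨x, hx, hw⟩ := h; exact ⟨x, hmono _ _ hx, ih hw⟩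

end walks

section medist
variable {V : Type*} {m m' : Multiset (Sym2 V)} {u v w : V}

theorem mAdj_symm (h : mAdj m u v) : mAdj m v u := by
  unfold mAdj at *; rwa [Sym2.eq_swap]

theorem mAdj_mono (hle : m ≤ m') (h : mAdj m u v) : mAdj m' u v :=
  Multiset.mem_of_le hle h

theorem medist_le_of_walk {k : ℕ} (h : walkLen (mAdj m) k u v) :
    medist m u v ≤ (k : ℕ∞) :=
  sInf_le ⟨k, h, rfl⟩

theorem medist_self : medist m u u = 0 := by
  simpa using medist_le_of_walk (m := m) (u := u) (v := u) (k := 0) rfl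

theorem medist_walk (h : medist m u v ≠ ⊤) :
    walkLen (mAdj m) (medist m u v).toNat u v := by
  have hne : {n : ℕ | walkLen (mAdj m) n u v}.Nonempty := by
    by_contra he
    rw [Set.not_nonempty_iff_eq_empty] at he
    simp [medist, he] at h
  set S := {n : ℕ | walkLen (mAdj m) n u v}
  have hmem : sInf S ∈ S := Nat.sInf_mem hne
  have : medist m u v = ((sInf S : ℕ) : ℕ∞) := by
    apply le_antisymm (sInf_le (Set.mem_image_of_mem _ hmem))
    apply le_sInf
    rintro x ⟨n, hn, rfl⟩
    show ((sInf S : ℕ) : ℕ∞) ≤ (n : ℕ∞)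
    exact_mod_cast Nat.sInf_le hn
  rw [this]
  simpa using (show walkLen (mAdj m) (sInf S) u v from hmem)

theorem medist_anti (hle : m ≤ m') : medist m' u v ≤ medist m u v := by
  apply le_sInf
  rintro x ⟨n, hn, rfl⟩
  exact medist_le_of_walk (walkLen_mono (fun _ _ h => mAdj_mono hle h) hn)

theorem medist_le_add_walk {j : ℕ} (hw : walkLen (mAdj m) j w v) :
    medist m u v ≤ medist m u w + (j : ℕ∞) := by
  rcases eq_or_ne (medist m u w) ⊤ with h | h
  · simp [h]
  · calc medist m u v ≤ (((medist m u w).toNat + j : ℕ) : ℕ∞) :=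
          medist_le_of_walk (walkLen_trans (medist_walk h) hw)
      _ = medist m u w + (j : ℕ∞) := by
          push_cast
          rw [ENat.coe_toNat h]

theorem medist_zero (hne : u ≠ v) : medist (0 : Multiset (Sym2 V)) u v = ⊤ := by
  have : {n : ℕ | walkLen (mAdj (0 : Multiset (Sym2 V))) n u v} = ∅ := by
    ext n
    simp only [Set.mem_setOf_eq, Set.mem_empty_iff_false, iff_false]
    intro h
    cases n with
    | zero => exact hne h
    | succ k => obtain ⟨x, hx, _⟩ := h; simp [mAdj] at hx
  simp [medist, this]

end medist

/-- Core savings lemma: adding the edge `s(u,v)` when `d(u,v) ≥ 4ℓ` saves at least `2ℓ²`. -/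
theorem core_saving {V : Type*} [DecidableEq V] [Fintype V] (k : Multiset (Sym2 V))
    (u v : V) (ℓ : ℕ) (hℓ : 1 ≤ ℓ) (hfin : ∀ w, medist k u w ≠ ⊤)
    (hd : 4 * ℓ ≤ (medist k u v).toNat) :
    ∑ w : V, (medist (s(u, v) ::ₘ k) u w).toNat + 2 * ℓ ^ 2 ≤
      ∑ w : V, (medist k u w).toNat := by
  classical
  set k' := s(u, v) ::ₘ k with hk'
  set d := (medist k u v).toNat with hdd
  have hdk : medist k u v = (d : ℕ∞) := (ENat.coe_toNat (hfin v)).symm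
  have hwalk : walkLen (mAdj k) d u v := medist_walk (hfin v)
  have hfin' : ∀ w, medist k' u w ≠ ⊤ := fun w =>
    fun h => hfin w (top_le_iff.mp (h ▸ medist_anti (Multiset.le_cons_self k _)))
  set old : V → ℕ := fun w => (medist k u w).toNat with hold
  set new : V → ℕ := fun w => (medist k' u w).toNat with hnew
  have hmono : ∀ w, new w ≤ old w := fun w =>
    ENat.toNat_le_toNat (medist_anti (Multiset.le_cons_self k _)) (hfin w)
  -- choose the vertices along a shortest path
  have H : ∀ j : ℕ, ∃ y : V, j < ℓ →
      walkLen (mAdj k) (d - j) u y ∧ walkLen (mAdj k) j y v := by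
    intro j
    by_cases hj : j < ℓ
    · have : d - j + j = d := Nat.sub_add_cancel (by omega)
      obtain ⟨y, h1, h2⟩ := walkLen_split (this ▸ hwalk)
      exact ⟨y, fun _ => ⟨h1, h2⟩⟩
    · exact ⟨u, fun h => absurd h hj⟩
  choose y hy using H
  have hyold : ∀ j, j < ℓ → old (y j) = d - j := by
    intro j hj
    obtain ⟨h1, h2⟩ := hy j hj
    have hub : medist k u (y j) ≤ ((d - j : ℕ) : ℕ∞) := medist_le_of_walk h1
    have hlb : (d : ℕ∞) ≤ medist k u (y j) + (j : ℕ∞) := hdk ▸ medist_le_add_walk h2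
    have h3 : old (y j) ≤ d - j := ENat.toNat_le_of_le_coe hub
    have h4 : d ≤ old (y j) + j := by
      have : ((d : ℕ) : ℕ∞) ≤ ((old (y j) + j : ℕ) : ℕ∞) := by
        push_cast
        rw [hold]
        rwa [ENat.coe_toNat (hfin (y j))]
      exact_mod_cast this
    omega
  have hynew : ∀ j, j < ℓ → new (y j) ≤ 1 + j := by
    intro j hj
    obtain ⟨h1, h2⟩ := hy j hj
    have e1 : walkLen (mAdj k') 1 u v := ⟨v, Multiset.mem_cons_self _ _, rfl⟩
    have e2 : walkLen (mAdj k') j v (y j) :=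
      walkLen_reverse (fun _ _ h => mAdj_symm h)
        (walkLen_mono (fun _ _ h => mAdj_mono (Multiset.le_cons_self k _) h) h2)
    exact ENat.toNat_le_of_le_coe (by exact_mod_cast medist_le_of_walk (walkLen_trans e1 e2))
  have hyinj : Set.InjOn y (Finset.range ℓ) := by
    intro a ha b hb hab
    simp only [Finset.coe_range, Set.mem_Iio] at ha hb
    have := hyold a ha
    rw [hab, hyold b hb] at this
    omega
  set T : Finset V := (Finset.range ℓ).image y with hT
  have hTcard : T.card = ℓ := by rw [hT, Finset.card_image_of_injOn hyinj, Finset.card_range]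
  have hsave : ∀ w ∈ T, new w + 2 * ℓ ≤ old w := by
    intro w hw
    obtain ⟨j, hj, rfl⟩ := Finset.mem_image.mp hw
    rw [Finset.mem_range] at hj
    have := hyold j hj
    have := hynew j hj
    omega
  have e1 : ∑ w ∈ Finset.univ \ T, old w + ∑ w ∈ T, old w = ∑ w : V, old w :=
    Finset.sum_sdiff (Finset.subset_univ T)
  have e2 : ∑ w ∈ Finset.univ \ T, new w + ∑ w ∈ T, new w = ∑ w : V, new w :=
    Finset.sum_sdiff (Finset.subset_univ T)
  have e3 : ∑ w ∈ T, new w + 2 * ℓ ^ 2 ≤ ∑ w ∈ T, old w := by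
    calc ∑ w ∈ T, new w + 2 * ℓ ^ 2 = ∑ w ∈ T, (new w + 2 * ℓ) := by
          rw [Finset.sum_add_distrib, Finset.sum_const, hTcard, smul_eq_mul]; ring
      _ ≤ ∑ w ∈ T, old w := Finset.sum_le_sum hsave
  have e4 : ∑ w ∈ Finset.univ \ T, new w ≤ ∑ w ∈ Finset.univ \ T, old w :=
    Finset.sum_le_sum (fun w _ => hmono w)
  have : ∑ w : V, new w + 2 * ℓ ^ 2 ≤ ∑ w : V, old w := by omega
  simpa [hnew, hold] using this

theorem edgeMS_eq {n : ℕ} (s : Fin n → Multiset (Fin n)) (u : Fin n) :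
    edgeMS s = (s u).map (fun v => s(u, v)) +
      ∑ x ∈ Finset.univ.erase u, (s x).map (fun v => s(x, v)) :=
  (Finset.add_sum_erase _ _ (Finset.mem_univ u)).symm

theorem edgeMS_update {n : ℕ} (s : Fin n → Multiset (Fin n)) (u : Fin n)
    (t : Multiset (Fin n)) :
    edgeMS (Function.update s u t) = t.map (fun v => s(u, v)) +
      ∑ x ∈ Finset.univ.erase u, (s x).map (fun v => s(x, v)) := by
  rw [edgeMS_eq (Function.update s u t) u, Function.update_self]
  congr 1
  apply Finset.sum_congr rfl
  intro x hx
  rw [Function.update_of_ne (Finset.ne_of_mem_erase hx)]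

theorem edgeMS_update_cons {n : ℕ} (s : Fin n → Multiset (Fin n)) (u v : Fin n) :
    edgeMS (Function.update s u (v ::ₘ s u)) = s(u, v) ::ₘ edgeMS s := by
  rw [edgeMS_update, Multiset.map_cons, Multiset.cons_add, ← edgeMS_eq]

theorem edgeMS_update_add {n : ℕ} (s : Fin n → Multiset (Fin n)) (u : Fin n)
    (q : Multiset (Fin n)) :
    edgeMS (Function.update s u (s u + q)) = edgeMS s + q.map (fun v => s(u, v)) := by
  rw [edgeMS_update, Multiset.map_add, edgeMS_eq s u]
  abel

/-- Finiteness at a NE with finite `α`. -/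
theorem NE_finite {n : ℕ} (α : ℝ≥0∞) (hα : α ≠ ⊤) (s : Fin n → Multiset (Fin n))
    (hown : ∀ u : Fin n, u ∉ s u) (hNE : IsNE α s) (u : Fin n) (hn : 2 ≤ n) :
    Multiset.card (edgeMS s) ≠ 0 ∧
      ∀ e ∈ edgeMS s, ∀ w, medist ((edgeMS s).erase e) u w ≠ ⊤ := by
  classical
  set m := edgeMS s with hm
  set q : Multiset (Fin n) := (Finset.univ.erase u).val with hq
  have huq : u ∉ q := by simp [hq, Multiset.mem_erase_of_ne, ← Finset.erase_val]
  
  set t0 : Multiset (Fin n) := s u + (q + q) with ht0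
  have hut0 : u ∉ t0 := by
    simp only [ht0, Multiset.mem_add]
    rintro (h | h | h) <;> [exact hown u h; exact huq h; exact huq h]
  set m'' := edgeMS (Function.update s u t0) with hm''
  have hm''eq : m'' = m + (q + q).map (fun v => s(u, v)) := edgeMS_update_add s u (q + q)
  have hqcard : Multiset.card q = n - 1 := by
    simp [hq, Finset.card_erase_of_mem]
  -- every vertex ≠ u is adjacent to u in m'' minus any one edge
  have hadj : ∀ (e : Sym2 (Fin n)) (w : Fin n), w ≠ u → s(u, w) ∈ m''.erase e := by
    intro e w hw
    rw [← Multiset.one_le_count_iff_mem, ← Multiset.sub_singleton, Multiset.count_sub]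
    have h2 : 2 ≤ Multiset.count s(u, w) m'' := by
      rw [hm''eq, Multiset.count_add, Multiset.map_add, Multiset.count_add]
      have h1 : 1 ≤ Multiset.count s(u, w) (q.map (fun v => s(u, v))) := by
        rw [Multiset.one_le_count_iff_mem]
        exact Multiset.mem_map_of_mem _ (by rw [hq, ← Finset.mem_def]; simp [hw])
      omega
    have : Multiset.count s(u, w) ({e} : Multiset (Sym2 (Fin n))) ≤ 1 := by
      rcases eq_or_ne s(u, w) e with h | h <;> simp [h]
    omega
  have hm''card : Multiset.card m'' ≠ 0 := by
    rw [hm''eq]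
    simp only [Multiset.card_add, Multiset.card_map, hqcard]
    omega
  -- bound evCost m'' u
  have hev'' : evCost m'' u ≤ (n : ℝ≥0∞) := by
    rw [evCost, if_neg hm''card]
    have hF : ∀ e ∈ m'',
        (∑ w : Fin n, ((medist (m''.erase e) u w : ℕ∞) : ℝ≥0∞)) ≤ (n : ℝ≥0∞) := by
      intro e _
      calc ∑ w : Fin n, ((medist (m''.erase e) u w : ℕ∞) : ℝ≥0∞)
          ≤ ∑ _w : Fin n, (1 : ℝ≥0∞) := by
            apply Finset.sum_le_sum
            intro w _
            rcases eq_or_ne w u with rfl | hw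
            · simp [medist_self]
            · have : medist (m''.erase e) u w ≤ (1 : ℕ) :=
                medist_le_of_walk ⟨w, hadj e w hw, rfl⟩
              calc ((medist (m''.erase e) u w : ℕ∞) : ℝ≥0∞)
                  ≤ (((1 : ℕ) : ℕ∞) : ℝ≥0∞) := ENat.toENNReal_le.mpr this
                _ = 1 := by simp
        _ = (n : ℝ≥0∞) := by simp
    calc (Multiset.card m'' : ℝ≥0∞)⁻¹ *
          (m''.map (fun e => ∑ w : Fin n, ((medist (m''.erase e) u w : ℕ∞) : ℝ≥0∞))).sum
        ≤ (Multiset.card m'' : ℝ≥0∞)⁻¹ * (m''.map (fun _ => (n : ℝ≥0∞))).sum := by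
          exact mul_le_mul_right (Multiset.sum_map_le_sum_map _ _ hF) _
      _ = (Multiset.card m'' : ℝ≥0∞)⁻¹ * ((Multiset.card m'' : ℝ≥0∞) * n) := by
          rw [Multiset.map_const', Multiset.sum_replicate, nsmul_eq_mul]
      _ = ((Multiset.card m'' : ℝ≥0∞)⁻¹ * (Multiset.card m'')) * n := by ring
      _ ≤ (n : ℝ≥0∞) := by
          rw [ENNReal.inv_mul_cancel (by exact_mod_cast hm''card) (ENNReal.natCast_ne_top _),
            one_mul]
  -- evCost m u is finite
  have hevfin : evCost m u ≠ ⊤ := by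
    have hle := hNE u t0 hut0
    rw [agentCost, agentCost] at hle
    have hRHS : α * (Multiset.card (Function.update s u t0 u) : ℝ≥0∞) +
        evCost (edgeMS (Function.update s u t0)) u ≠ ⊤ := by
      apply ENNReal.add_ne_top.mpr
      constructor
      · exact ENNReal.mul_ne_top hα (ENNReal.natCast_ne_top _)
      · exact ne_top_of_le_ne_top (ENNReal.natCast_ne_top n) hev''
    intro htop
    apply hRHS
    rw [htop] at hle
    exact top_le_iff.mp (le_trans le_add_self hle)
  have hcard : Multiset.card m ≠ 0 := by
    intro h0
    have hmm : m = 0 := Multiset.card_eq_zero.mp h0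
    obtain ⟨v₀, hv₀⟩ := Fintype.exists_ne_of_one_lt_card
      (by rw [Fintype.card_fin]; omega) u
    apply hevfin
    rw [evCost, if_pos h0, ENNReal.sum_eq_top]
    exact ⟨v₀, Finset.mem_univ _, by rw [hmm, medist_zero (Ne.symm hv₀)]; simp⟩
  refine ⟨hcard, ?_⟩
  intro e he w
  rw [evCost, if_neg hcard] at hevfin
  have hMinv : (Multiset.card m : ℝ≥0∞)⁻¹ ≠ 0 :=
    ENNReal.inv_ne_zero.mpr (ENNReal.natCast_ne_top _)
  have hsum : (m.map (fun e => ∑ w : Fin n,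
      ((medist (m.erase e) u w : ℕ∞) : ℝ≥0∞))).sum ≠ ⊤ := by
    intro h
    rw [h, ENNReal.mul_top hMinv] at hevfin
    exact hevfin rfl
  have hFe : (∑ w : Fin n, ((medist (m.erase e) u w : ℕ∞) : ℝ≥0∞)) ≠ ⊤ :=
    ne_top_of_le_ne_top hsum (Multiset.le_sum_of_mem (Multiset.mem_map_of_mem (fun e => ∑ w : Fin n, ((medist (m.erase e) u w : ℕ∞) : ℝ≥0∞)) he))
  have hterm : ((medist (m.erase e) u w : ℕ∞) : ℝ≥0∞) ≠ ⊤ :=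
    ne_top_of_le_ne_top hFe
      (Finset.single_le_sum (f := fun w => ((medist (m.erase e) u w : ℕ∞) : ℝ≥0∞))
        (fun _ _ => zero_le) (Finset.mem_univ w))
  intro h
  rw [h] at hterm
  simp at hterm

theorem NE_alpha_bound {n : ℕ} (α : ℝ≥0∞) (s : Fin n → Multiset (Fin n))
    (hown : ∀ u : Fin n, u ∉ s u) (hNE : IsNE α s) (u v : Fin n) (ℓ : ℕ) (hℓ : 1 ≤ ℓ)
    (hd : ((4 * ℓ : ℕ) : ℕ∞) ≤ medist (edgeMS s) u v) :
    ((Multiset.card (edgeMS s) : ℝ≥0∞) / ((Multiset.card (edgeMS s) : ℝ≥0∞) + 1)) *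
      (2 * (ℓ : ℝ≥0∞) ^ 2) ≤ α := by
  classical
  rcases eq_or_ne α ⊤ with rfl | hα
  · exact le_top
  set m := edgeMS s with hm
  -- u ≠ v
  have huv : u ≠ v := by
    rintro rfl
    rw [medist_self] at hd
    have : (4 * ℓ : ℕ) ≤ 0 := by exact_mod_cast hd
    omega
  have hn : 2 ≤ n := by
    have : 1 < Fintype.card (Fin n) := Fintype.one_lt_card_iff_nontrivial.mpr ⟨u, v, huv⟩
    rwa [Fintype.card_fin] at this
  obtain ⟨hM0, hfin⟩ := NE_finite α hα s hown hNE u hn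
  set M := Multiset.card m with hMdef
  -- the new edge is not an existing one
  have hsuv : s(u, v) ∉ m := by
    intro hmem
    have h1 : medist m u v ≤ ((1 : ℕ) : ℕ∞) := medist_le_of_walk ⟨v, hmem, rfl⟩
    have : (4 * ℓ : ℕ) ≤ 1 := by exact_mod_cast le_trans hd h1
    omega
  -- some edge exists
  obtain ⟨e₀, he₀⟩ := Multiset.exists_mem_of_ne_zero
    (fun h : m = 0 => hM0 (by rw [hMdef, h]; rfl))
  have hfin0 : ∀ w, medist m u w ≠ ⊤ := fun w =>
    ne_top_of_le_ne_top (hfin e₀ he₀ w) (medist_anti (Multiset.erase_le _ _))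
  -- natural-number distance sums
  set Dnat : Sym2 (Fin n) → ℕ := fun e => ∑ w : Fin n, (medist (m.erase e) u w).toNat
    with hDnat
  set D'nat : Sym2 (Fin n) → ℕ :=
    fun e => ∑ w : Fin n, (medist (s(u, v) ::ₘ m.erase e) u w).toNat with hD'nat
  set D0 : ℕ := ∑ w : Fin n, (medist m u w).toNat with hD0
  set S : ℕ := (m.map Dnat).sum with hS
  set S' : ℕ := (m.map D'nat).sum with hS'
  -- per-edge savings
  have hsave : ∀ e ∈ m, D'nat e + 2 * ℓ ^ 2 ≤ Dnat e := by
    intro e he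
    apply core_saving (m.erase e) u v ℓ hℓ (hfin e he)
    have h1 : ((4 * ℓ : ℕ) : ℕ∞) ≤ medist (m.erase e) u v :=
      le_trans hd (medist_anti (Multiset.erase_le _ _))
    rw [← ENat.coe_toNat (hfin e he v)] at h1
    exact_mod_cast h1
  -- each D0 ≤ Dnat e
  have hD0le : ∀ e ∈ m, D0 ≤ Dnat e := by
    intro e he
    apply Finset.sum_le_sum
    intro w _
    exact ENat.toNat_le_toNat (medist_anti (Multiset.erase_le _ _)) (hfin e he w)
  have hMD0 : M * D0 ≤ S := by
    calc M * D0 = (m.map (fun _ => D0)).sum := by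
          rw [Multiset.map_const', Multiset.sum_replicate, smul_eq_mul]
      _ ≤ S := Multiset.sum_map_le_sum_map _ _ hD0le
  have hS'S : S' + M * (2 * ℓ ^ 2) ≤ S := by
    calc S' + M * (2 * ℓ ^ 2)
        = (m.map D'nat).sum + (m.map (fun _ => 2 * ℓ ^ 2)).sum := by
          rw [Multiset.map_const', Multiset.sum_replicate, smul_eq_mul]
      _ = (m.map (fun e => D'nat e + 2 * ℓ ^ 2)).sum := (Multiset.sum_map_add).symm
      _ ≤ S := Multiset.sum_map_le_sum_map _ _ hsave
  have natkey : ((D0 + S') + M * (2 * ℓ ^ 2)) * M ≤ S * (M + 1) := by nlinarith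
  -- evCost of current graph
  have hev : evCost m u = (S : ℝ≥0∞) / (M : ℝ≥0∞) := by
    rw [evCost, if_neg hM0]
    have h1 : m.map (fun e => ∑ w : Fin n, ((medist (m.erase e) u w : ℕ∞) : ℝ≥0∞)) =
        m.map (fun e => ((Dnat e : ℕ) : ℝ≥0∞)) := by
      apply Multiset.map_congr rfl
      intro e he
      rw [hDnat]
      push_cast
      apply Finset.sum_congr rfl
      intro w _
      rw [← ENat.coe_toNat (hfin e he w), ENat.toENNReal_coe, ENat.toNat_coe]
    have h2 : (Multiset.map (fun e => ((Dnat e : ℕ) : ℝ≥0∞)) m).sum = ((S : ℕ) : ℝ≥0∞) := by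
      rw [hS, Nat.cast_multiset_sum, Multiset.map_map]
      rfl
    rw [h1, h2, ENNReal.div_eq_inv_mul]
  -- evCost of deviated graph
  have hm' : edgeMS (Function.update s u (v ::ₘ s u)) = s(u, v) ::ₘ m :=
    edgeMS_update_cons s u v
  have hev' : evCost (s(u, v) ::ₘ m) u = ((D0 : ℝ≥0∞) + (S' : ℝ≥0∞)) / ((M : ℝ≥0∞) + 1) := by
    rw [evCost, if_neg (by simp)]
    have h1 : (s(u, v) ::ₘ m).map
        (fun e => ∑ w : Fin n, ((medist ((s(u, v) ::ₘ m).erase e) u w : ℕ∞) : ℝ≥0∞)) =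
        ((D0 : ℝ≥0∞)) ::ₘ m.map (fun e => ((D'nat e : ℕ) : ℝ≥0∞)) := by
      rw [Multiset.map_cons, Multiset.erase_cons_head]
      congr 1
      · rw [hD0]
        push_cast
        apply Finset.sum_congr rfl
        intro w _
        rw [← ENat.coe_toNat (hfin0 w), ENat.toENNReal_coe, ENat.toNat_coe]
      · apply Multiset.map_congr rfl
        intro e he
        have hne : s(u, v) ≠ e := fun h => hsuv (h ▸ he)
        rw [Multiset.erase_cons_tail _ hne, hD'nat]
        push_cast
        apply Finset.sum_congr rfl
        intro w _
        have hfw : medist (s(u, v) ::ₘ m.erase e) u w ≠ ⊤ :=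
          ne_top_of_le_ne_top (hfin e he w) (medist_anti (Multiset.le_cons_self _ _))
        rw [← ENat.coe_toNat hfw, ENat.toENNReal_coe, ENat.toNat_coe]
    have h2 : (Multiset.map (fun e => ((D'nat e : ℕ) : ℝ≥0∞)) m).sum = ((S' : ℕ) : ℝ≥0∞) := by
      rw [hS', Nat.cast_multiset_sum, Multiset.map_map]
      rfl
    rw [h1, Multiset.sum_cons, h2, Multiset.card_cons, ENNReal.div_eq_inv_mul]
    push_cast
    ring
  -- the Nash equilibrium inequality
  have hut : u ∉ v ::ₘ s u := by
    rw [Multiset.mem_cons]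
    rintro (rfl | h) <;> [exact huv rfl; exact hown u h]
  have hle := hNE u (v ::ₘ s u) hut
  rw [agentCost, agentCost, Function.update_self, hm', ← hm, hev, hev',
    Multiset.card_cons] at hle
  push_cast at hle
  rw [mul_add, mul_one, add_assoc] at hle
  have hcancel : (S : ℝ≥0∞) / (M : ℝ≥0∞) ≤
      α + ((D0 : ℝ≥0∞) + (S' : ℝ≥0∞)) / ((M : ℝ≥0∞) + 1) :=
    (ENNReal.add_le_add_iff_left
      (ENNReal.mul_ne_top hα (ENNReal.natCast_ne_top _))).mp hle
  -- key division inequality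
  have hM1ne0 : ((M : ℝ≥0∞) + 1) ≠ 0 := by
    intro h
    simpa using (add_eq_zero.mp h).2
  have hM1netop : ((M : ℝ≥0∞) + 1) ≠ ⊤ := by
    simp [ENNReal.add_eq_top, ENNReal.natCast_ne_top]
  have hMne0 : (M : ℝ≥0∞) ≠ 0 := by exact_mod_cast hM0
  have hMnetop : (M : ℝ≥0∞) ≠ ⊤ := ENNReal.natCast_ne_top _
  have key : ((D0 : ℝ≥0∞) + (S' : ℝ≥0∞)) / ((M : ℝ≥0∞) + 1) +
      ((M : ℝ≥0∞) / ((M : ℝ≥0∞) + 1)) * (2 * (ℓ : ℝ≥0∞) ^ 2) ≤ (S : ℝ≥0∞) / (M : ℝ≥0∞) := by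
    have e1 : ((M : ℝ≥0∞) / ((M : ℝ≥0∞) + 1)) * (2 * (ℓ : ℝ≥0∞) ^ 2) =
        ((M : ℝ≥0∞) * (2 * (ℓ : ℝ≥0∞) ^ 2)) / ((M : ℝ≥0∞) + 1) := by
      simp only [div_eq_mul_inv]
      ring
    rw [e1, ENNReal.div_add_div_same, ENNReal.div_le_iff_le_mul (Or.inl hM1ne0)
      (Or.inl hM1netop)]
    rw [div_eq_mul_inv, mul_right_comm, ← div_eq_mul_inv,
      ENNReal.le_div_iff_mul_le (Or.inl hMne0) (Or.inl hMnetop)]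
    have h2 : (((D0 + S' + M * (2 * ℓ ^ 2)) * M : ℕ) : ℝ≥0∞) ≤
        ((S * (M + 1) : ℕ) : ℝ≥0∞) := by exact_mod_cast natkey
    push_cast at h2
    convert h2 using 1 <;> ring
  -- conclude
  have hYne : ((D0 : ℝ≥0∞) + (S' : ℝ≥0∞)) / ((M : ℝ≥0∞) + 1) ≠ ⊤ := by
    rw [Ne, ENNReal.div_eq_top]
    push_neg
    refine ⟨fun _ => hM1ne0, fun h => absurd h ?_⟩
    simp [ENNReal.add_eq_top, ENNReal.natCast_ne_top]
  have final := le_trans key hcancel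
  rw [add_comm α _] at final
  exact (ENNReal.add_le_add_iff_left hYne).mp final

/-- In any pure Nash equilibrium of the adversarial network creation game, if two agents
`u` and `v` are at distance at least `4ℓ`, then `α ≥ (|E|/(|E|+1))·2ℓ²`; consequently
(for `α < ∞` and `n ≥ 2`) every Nash equilibrium network has diameter `O(√α)`, concretely
all distances are finite and at most `4√α + 4`. -/
theorem NE_distance_bound {n : ℕ} (α : ℝ≥0∞) (s : Fin n → Multiset (Fin n))
    (hown : ∀ u : Fin n, u ∉ s u) (hNE : IsNE α s) :
    (∀ (u v : Fin n) (ℓ : ℕ), 1 ≤ ℓ →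
      ((4 * ℓ : ℕ) : ℕ∞) ≤ medist (edgeMS s) u v →
      ((Multiset.card (edgeMS s) : ℝ≥0∞) / ((Multiset.card (edgeMS s) : ℝ≥0∞) + 1)) *
        (2 * (ℓ : ℝ≥0∞) ^ 2) ≤ α) ∧
    (α ≠ ⊤ → 2 ≤ n → ∀ x y : Fin n,
      medist (edgeMS s) x y ≠ ⊤ ∧
      ((medist (edgeMS s) x y).toNat : ℝ) ≤ 4 * Real.sqrt α.toReal + 4) := by
  constructor
  · exact fun u v ℓ hℓ hd => NE_alpha_bound α s hown hNE u v ℓ hℓ hd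
  · intro hα hn x y
    obtain ⟨hM0, hfin⟩ := NE_finite α hα s hown hNE x hn
    set m := edgeMS s with hm
    set M := Multiset.card m with hMdef
    obtain ⟨e₀, he₀⟩ := Multiset.exists_mem_of_ne_zero
      (fun h : m = 0 => hM0 (by rw [hMdef, h]; rfl))
    have hfinxy : medist m x y ≠ ⊤ :=
      ne_top_of_le_ne_top (hfin e₀ he₀ y) (medist_anti (Multiset.erase_le _ _))
    refine ⟨hfinxy, ?_⟩
    set a : ℝ := α.toReal with ha
    have ha0 : 0 ≤ a := ENNReal.toReal_nonneg
    set ℓ : ℕ := Nat.floor (Real.sqrt a) + 1 with hℓdef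
    have hℓ : 1 ≤ ℓ := Nat.le_add_left 1 _
    have hM1 : 1 ≤ M := Nat.one_le_iff_ne_zero.mpr hM0
    -- α < ℓ²
    have hαlt : α < ((ℓ ^ 2 : ℕ) : ℝ≥0∞) := by
      rw [← ENNReal.toReal_lt_toReal hα (ENNReal.natCast_ne_top _), ENNReal.toReal_natCast]
      have h1 : Real.sqrt a < (ℓ : ℝ) := by
        rw [hℓdef]
        push_cast
        exact Nat.lt_floor_add_one _
      calc α.toReal = a := rfl
        _ = Real.sqrt a * Real.sqrt a := (Real.mul_self_sqrt ha0).symm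
        _ < (ℓ : ℝ) * (ℓ : ℝ) :=
            mul_self_lt_mul_self (Real.sqrt_nonneg a) h1
        _ = ((ℓ ^ 2 : ℕ) : ℝ) := by push_cast; ring
    -- distance must be < 4ℓ
    have hd : ¬ ((4 * ℓ : ℕ) : ℕ∞) ≤ medist m x y := by
      intro hd
      have hb := NE_alpha_bound α s hown hNE x y ℓ hℓ hd
      rw [← hm, ← hMdef] at hb
      have hM1ne0 : ((M : ℝ≥0∞) + 1) ≠ 0 := by
        intro h
        simpa using (add_eq_zero.mp h).2
      have hM1netop : ((M : ℝ≥0∞) + 1) ≠ ⊤ := by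
        simp [ENNReal.add_eq_top, ENNReal.natCast_ne_top]
      have hhalf : (1 / 2 : ℝ≥0∞) ≤ (M : ℝ≥0∞) / ((M : ℝ≥0∞) + 1) := by
        rw [ENNReal.le_div_iff_mul_le (Or.inl hM1ne0) (Or.inl hM1netop)]
        have h2 : ((M : ℝ≥0∞) + 1) ≤ 2 * (M : ℝ≥0∞) := by
          have : ((M + 1 : ℕ) : ℝ≥0∞) ≤ ((2 * M : ℕ) : ℝ≥0∞) := by
            exact_mod_cast (by omega : M + 1 ≤ 2 * M)
          push_cast at this
          convert this using 2
        calc (1 / 2 : ℝ≥0∞) * ((M : ℝ≥0∞) + 1) ≤ (1 / 2 : ℝ≥0∞) * (2 * (M : ℝ≥0∞)) :=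
              mul_le_mul_right h2 _
          _ = ((1 / 2 : ℝ≥0∞) * 2) * (M : ℝ≥0∞) := by ring
          _ = (M : ℝ≥0∞) := by
              rw [one_div, ENNReal.inv_mul_cancel (by norm_num) (by norm_num), one_mul]
      have hsq : ((ℓ ^ 2 : ℕ) : ℝ≥0∞) ≤
          ((M : ℝ≥0∞) / ((M : ℝ≥0∞) + 1)) * (2 * (ℓ : ℝ≥0∞) ^ 2) := by
        calc ((ℓ ^ 2 : ℕ) : ℝ≥0∞) = (1 / 2 : ℝ≥0∞) * (2 * (ℓ : ℝ≥0∞) ^ 2) := by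
              push_cast
              rw [one_div, ← mul_assoc, ENNReal.inv_mul_cancel (by norm_num) (by norm_num),
                one_mul]
          _ ≤ ((M : ℝ≥0∞) / ((M : ℝ≥0∞) + 1)) * (2 * (ℓ : ℝ≥0∞) ^ 2) :=
              mul_le_mul_left hhalf _
      exact absurd (lt_of_lt_of_le (lt_of_lt_of_le hαlt hsq) hb) (lt_irrefl α).elim
    -- convert to the real bound
    have hlt : (medist m x y).toNat < 4 * ℓ := by
      rw [not_le] at hd
      rw [← ENat.coe_toNat hfinxy] at hd
      exact_mod_cast hd
    have hfl : ((Nat.floor (Real.sqrt a) : ℕ) : ℝ) ≤ Real.sqrt a :=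
      Nat.floor_le (Real.sqrt_nonneg a)
    calc ((medist m x y).toNat : ℝ) ≤ ((4 * ℓ : ℕ) : ℝ) := by exact_mod_cast hlt.le
      _ = 4 * ((Nat.floor (Real.sqrt a) : ℕ) : ℝ) + 4 := by rw [hℓdef]; push_cast; ring
      _ ≤ 4 * Real.sqrt a + 4 := by linarith
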